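/- Let {φ_k} be an orthonormal basis of H1 satisfying Condition 3, and for each k let φ̃_k = Σ_i ρ_i^{−1} ⟨φ_k, e_i⟩ g_i ∈ H2 (a finite sum). Then for every m ≥ 1: (i) ‖φ̃_k‖_{H2}² = Σ_i ρ_i^{−2} ⟨φ_k, e_i⟩² ≤ δ_m^{−2} for every 1 ≤ k ≤ m, and (ii) for every h ∈ H1, ‖Σ_{k=1}^m ⟨h, φ_k⟩ φ̃_k‖_{H2} ≤ δ_m^{−1} ‖h‖_{H1}. -/

import Mathlib

open MeasureTheory ProbabilityTheory Real Filter
open scoped ENNReal NNReal RealInnerProductSpace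

/-- Norm squared of a finite orthonormal combination. -/
lemma orthonormal_norm_sq_sum' {H : Type*} [NormedAddCommGroup H] [InnerProductSpace ℝ H]
    {g : ℕ → H} (hg : Orthonormal ℝ g) (c : ℕ → ℝ) (s : Finset ℕ) :
    ‖∑ i ∈ s, c i • g i‖ ^ 2 = ∑ i ∈ s, c i ^ 2 := by
  have h := hg.inner_sum c c s
  simp only [conj_trivial] at h
  rw [← real_inner_self_eq_norm_sq, h]
  exact Finset.sum_congr rfl fun i _ => (sq (c i)).symm

/-- Parseval for a real Hilbert basis, squared form. -/
lemma hilbert_parseval' {H : Type*} [NormedAddCommGroup H] [InnerProductSpace ℝ H]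
    [CompleteSpace H] (b : HilbertBasis ℕ ℝ H) (x : H) :
    HasSum (fun i => ⟪x, b i⟫ ^ 2) (‖x‖ ^ 2) := by
  have h := b.hasSum_inner_mul_inner x x
  have hx : ⟪x, x⟫ = ‖x‖ ^ 2 := real_inner_self_eq_norm_sq x
  rw [hx] at h
  have hf : (fun i => ⟪x, b i⟫ ^ 2) = fun i => ⟪x, b i⟫ * ⟪b i, x⟫ := by
    funext i
    rw [real_inner_comm x (b i), sq]
  rw [hf]
  exact h

theorem conjugate_basis_bounds
    {H1 : Type*} [NormedAddCommGroup H1] [InnerProductSpace ℝ H1] [CompleteSpace H1]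
    {H2 : Type*} [NormedAddCommGroup H2] [InnerProductSpace ℝ H2] [CompleteSpace H2]
    (e : HilbertBasis ℕ ℝ H1) (g : ℕ → H2) (hg : Orthonormal ℝ g)
    (A : H1 →L[ℝ] H2) (hAinj : Function.Injective A)
    (ρ : ℕ → ℝ) (hρpos : ∀ k, 0 < ρ k)
    (hAe : ∀ k, A (e k) = ρ k • g k)
    (φ : HilbertBasis ℕ ℝ H1)
    (hφfin : ∀ k : ℕ, {l : ℕ | ⟪φ k, e l⟫ ≠ 0}.Finite)
    (m : ℕ) (hm : 1 ≤ m) :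
    (∀ k < m,
      ‖∑ᶠ i : ℕ, ((ρ i)⁻¹ * ⟪φ k, e i⟫) • g i‖ ^ 2
          = ∑' i : ℕ, ((ρ i)⁻¹) ^ 2 * ⟪φ k, e i⟫ ^ 2 ∧
      ∑' i : ℕ, ((ρ i)⁻¹) ^ 2 * ⟪φ k, e i⟫ ^ 2
          ≤ ((sInf {r : ℝ | ∃ l : ℕ, (∃ j < m, ⟪φ j, e l⟫ ≠ 0) ∧ r = |ρ l|})⁻¹) ^ 2) ∧
    (∀ h : H1,
      ‖∑ k ∈ Finset.range m, ⟪h, φ k⟫ • (∑ᶠ i : ℕ, ((ρ i)⁻¹ * ⟪φ k, e i⟫) • g i)‖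
        ≤ (sInf {r : ℝ | ∃ l : ℕ, (∃ j < m, ⟪φ j, e l⟫ ≠ 0) ∧ r = |ρ l|})⁻¹ * ‖h‖) := by
  classical
  set S : Set ℝ := {r : ℝ | ∃ l : ℕ, (∃ j < m, ⟪φ j, e l⟫ ≠ 0) ∧ r = |ρ l|} with hS
  set F : Finset ℕ := (Finset.range m).biUnion (fun j => (hφfin j).toFinset) with hF
  have hmemF : ∀ l, l ∈ F ↔ ∃ j < m, ⟪φ j, e l⟫ ≠ 0 := by
    intro l
    simp [hF, Set.Finite.mem_toFinset, Finset.mem_biUnion]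
  -- `F` is nonempty
  have hFne : F.Nonempty := by
    have h0 : φ 0 ≠ 0 := φ.orthonormal.ne_zero 0
    obtain ⟨l, hl⟩ : ∃ l, ⟪φ 0, e l⟫ ≠ 0 := by
      by_contra hc
      push_neg at hc
      apply h0
      have hrepr : e.repr (φ 0) = 0 := by
        ext l
        rw [e.repr_apply_apply, real_inner_comm]
        simpa using hc l
      have := congrArg e.repr.symm hrepr
      simpa using this
    exact ⟨l, (hmemF l).mpr ⟨0, hm, hl⟩⟩
  have hSeq : S = ↑(F.image fun l => |ρ l|) := by
    ext r
    simp only [hS, Set.mem_setOf_eq, Finset.coe_image, Set.mem_image, Finset.mem_coe]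
    constructor
    · rintro ⟨l, hl, rfl⟩; exact ⟨l, (hmemF l).mpr hl, rfl⟩
    · rintro ⟨l, hl, rfl⟩; exact ⟨l, (hmemF l).mp hl, rfl⟩
  have hFine : (F.image fun l => |ρ l|).Nonempty := hFne.image _
  have hδmin : sInf S = (F.image fun l => |ρ l|).min' hFine := by
    rw [hSeq, Finset.Nonempty.csInf_eq_min']
  have hδpos : 0 < sInf S := by
    rw [hδmin]
    obtain ⟨l, _, hlv⟩ := Finset.mem_image.mp ((F.image fun l => |ρ l|).min'_mem hFine)
    rw [← hlv]
    exact abs_pos.mpr (hρpos l).ne'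
  have hδle : ∀ l ∈ F, sInf S ≤ ρ l := by
    intro l hl
    have h1 := Finset.min'_le (F.image fun l => |ρ l|) (|ρ l|)
      (Finset.mem_image_of_mem _ hl)
    rw [hδmin]
    calc (F.image fun l => |ρ l|).min' hFine ≤ |ρ l| := h1
      _ = ρ l := abs_of_pos (hρpos l)
  have hcoef : ∀ l ∈ F, ((ρ l)⁻¹) ^ 2 ≤ ((sInf S)⁻¹) ^ 2 := by
    intro l hl
    have h1 : (ρ l)⁻¹ ≤ (sInf S)⁻¹ := by
      apply inv_anti₀ hδpos (hδle l hl)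
    exact pow_le_pow_left₀ (inv_nonneg.mpr (hρpos l).le) h1 2
  -- support of the coefficient function
  have hsupp : ∀ k : ℕ,
      (Function.support fun i => ((ρ i)⁻¹ * ⟪φ k, e i⟫) • g i) ⊆ ↑(hφfin k).toFinset := by
    intro k i hi
    rw [Finset.mem_coe, Set.Finite.mem_toFinset]
    intro h0
    apply hi
    simp [h0]
  have hfs : ∀ k : ℕ,
      ∑ᶠ i : ℕ, ((ρ i)⁻¹ * ⟪φ k, e i⟫) • g i
        = ∑ i ∈ (hφfin k).toFinset, ((ρ i)⁻¹ * ⟪φ k, e i⟫) • g i := by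
    intro k
    exact finsum_eq_sum_of_support_subset _ (hsupp k)
  have hSkF : ∀ k < m, (hφfin k).toFinset ⊆ F := by
    intro k hk i hi
    rw [Set.Finite.mem_toFinset] at hi
    exact (hmemF i).mpr ⟨k, hk, hi⟩
  constructor
  · -- part (i)
    intro k hk
    have hzero : ∀ i ∉ (hφfin k).toFinset, ((ρ i)⁻¹) ^ 2 * ⟪φ k, e i⟫ ^ 2 = 0 := by
      intro i hi
      rw [Set.Finite.mem_toFinset] at hi
      simp only [Set.mem_setOf_eq, not_not] at hi
      rw [hi]
      ring
    have htsum : ∑' i : ℕ, ((ρ i)⁻¹) ^ 2 * ⟪φ k, e i⟫ ^ 2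
        = ∑ i ∈ (hφfin k).toFinset, ((ρ i)⁻¹) ^ 2 * ⟪φ k, e i⟫ ^ 2 := tsum_eq_sum hzero
    constructor
    · rw [htsum, hfs k, orthonormal_norm_sq_sum' hg]
      exact Finset.sum_congr rfl fun i _ => by ring
    · have hpars := hilbert_parseval' e (φ k)
      have hnorm1 : ‖φ k‖ = 1 := φ.orthonormal.1 k
      have hb : ∑ i ∈ (hφfin k).toFinset, ⟪φ k, e i⟫ ^ 2 ≤ 1 := by
        have := Summable.sum_le_tsum (hφfin k).toFinset (fun i _ => sq_nonneg _) hpars.summable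
        rw [hpars.tsum_eq, hnorm1] at this
        simpa using this
      calc ∑' i : ℕ, ((ρ i)⁻¹) ^ 2 * ⟪φ k, e i⟫ ^ 2
          = ∑ i ∈ (hφfin k).toFinset, ((ρ i)⁻¹) ^ 2 * ⟪φ k, e i⟫ ^ 2 := htsum
        _ ≤ ∑ i ∈ (hφfin k).toFinset, ((sInf S)⁻¹) ^ 2 * ⟪φ k, e i⟫ ^ 2 :=
            Finset.sum_le_sum fun i hi =>
              mul_le_mul_of_nonneg_right (hcoef i (hSkF k hk hi)) (sq_nonneg _)
        _ = ((sInf S)⁻¹) ^ 2 * ∑ i ∈ (hφfin k).toFinset, ⟪φ k, e i⟫ ^ 2 := by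
            rw [Finset.mul_sum]
        _ ≤ ((sInf S)⁻¹) ^ 2 * 1 :=
            mul_le_mul_of_nonneg_left hb (sq_nonneg _)
        _ = ((sInf S)⁻¹) ^ 2 := mul_one _
  · -- part (ii)
    intro h
    set w : H1 := ∑ k ∈ Finset.range m, ⟪h, φ k⟫ • φ k with hw
    -- rewrite each finsum as a sum over F
    have hfsF : ∀ k < m,
        ∑ᶠ i : ℕ, ((ρ i)⁻¹ * ⟪φ k, e i⟫) • g i
          = ∑ i ∈ F, ((ρ i)⁻¹ * ⟪φ k, e i⟫) • g i := by
      intro k hk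
      exact finsum_eq_sum_of_support_subset _
        (Set.Subset.trans (hsupp k) (Finset.coe_subset.mpr (hSkF k hk)))
    have hswap : ∑ k ∈ Finset.range m, ⟪h, φ k⟫ • (∑ᶠ i : ℕ, ((ρ i)⁻¹ * ⟪φ k, e i⟫) • g i)
        = ∑ i ∈ F, ((ρ i)⁻¹ * ⟪w, e i⟫) • g i := by
      have hwi : ∀ i : ℕ, ⟪w, e i⟫ = ∑ k ∈ Finset.range m, ⟪h, φ k⟫ * ⟪φ k, e i⟫ := by
        intro i
        rw [hw, sum_inner]
        exact Finset.sum_congr rfl fun k _ => real_inner_smul_left _ _ _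
      calc ∑ k ∈ Finset.range m, ⟪h, φ k⟫ • (∑ᶠ i : ℕ, ((ρ i)⁻¹ * ⟪φ k, e i⟫) • g i)
          = ∑ k ∈ Finset.range m, ∑ i ∈ F, (⟪h, φ k⟫ * ((ρ i)⁻¹ * ⟪φ k, e i⟫)) • g i := by
            refine Finset.sum_congr rfl fun k hk => ?_
            rw [hfsF k (Finset.mem_range.mp hk), Finset.smul_sum]
            exact Finset.sum_congr rfl fun i _ => (smul_smul _ _ _)
        _ = ∑ i ∈ F, ∑ k ∈ Finset.range m, (⟪h, φ k⟫ * ((ρ i)⁻¹ * ⟪φ k, e i⟫)) • g i :=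
            Finset.sum_comm
        _ = ∑ i ∈ F, ((ρ i)⁻¹ * ⟪w, e i⟫) • g i := by
            refine Finset.sum_congr rfl fun i _ => ?_
            rw [← Finset.sum_smul, hwi i, Finset.mul_sum]
            congr 1
            exact Finset.sum_congr rfl fun k _ => by ring
    -- norm squared bound
    have hnormsq : ‖∑ k ∈ Finset.range m, ⟪h, φ k⟫ •
        (∑ᶠ i : ℕ, ((ρ i)⁻¹ * ⟪φ k, e i⟫) • g i)‖ ^ 2 ≤ ((sInf S)⁻¹ * ‖h‖) ^ 2 := by
      rw [hswap, orthonormal_norm_sq_sum' hg]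
      have hwpars := hilbert_parseval' e w
      have hwF : ∑ i ∈ F, ⟪w, e i⟫ ^ 2 ≤ ‖w‖ ^ 2 := by
        have := Summable.sum_le_tsum F (fun i _ => sq_nonneg _) hwpars.summable
        rwa [hwpars.tsum_eq] at this
      have hwh : ‖w‖ ^ 2 ≤ ‖h‖ ^ 2 := by
        rw [hw, orthonormal_norm_sq_sum' φ.orthonormal]
        have hpars := hilbert_parseval' φ h
        have := Summable.sum_le_tsum (Finset.range m) (fun i _ => sq_nonneg _) hpars.summable
        rwa [hpars.tsum_eq] at this
      calc ∑ i ∈ F, ((ρ i)⁻¹ * ⟪w, e i⟫) ^ 2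
          = ∑ i ∈ F, ((ρ i)⁻¹) ^ 2 * ⟪w, e i⟫ ^ 2 :=
            Finset.sum_congr rfl fun i _ => by ring
        _ ≤ ∑ i ∈ F, ((sInf S)⁻¹) ^ 2 * ⟪w, e i⟫ ^ 2 :=
            Finset.sum_le_sum fun i hi =>
              mul_le_mul_of_nonneg_right (hcoef i hi) (sq_nonneg _)
        _ = ((sInf S)⁻¹) ^ 2 * ∑ i ∈ F, ⟪w, e i⟫ ^ 2 := by rw [Finset.mul_sum]
        _ ≤ ((sInf S)⁻¹) ^ 2 * ‖w‖ ^ 2 :=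
            mul_le_mul_of_nonneg_left hwF (sq_nonneg _)
        _ ≤ ((sInf S)⁻¹) ^ 2 * ‖h‖ ^ 2 :=
            mul_le_mul_of_nonneg_left hwh (sq_nonneg _)
        _ = ((sInf S)⁻¹ * ‖h‖) ^ 2 := by ring
    have hrhs : 0 ≤ (sInf S)⁻¹ * ‖h‖ :=
      mul_nonneg (inv_nonneg.mpr hδpos.le) (norm_nonneg _)
    calc ‖∑ k ∈ Finset.range m, ⟪h, φ k⟫ • (∑ᶠ i : ℕ, ((ρ i)⁻¹ * ⟪φ k, e i⟫) • g i)‖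
        = Real.sqrt (‖∑ k ∈ Finset.range m, ⟪h, φ k⟫ •
            (∑ᶠ i : ℕ, ((ρ i)⁻¹ * ⟪φ k, e i⟫) • g i)‖ ^ 2) :=
          (Real.sqrt_sq (norm_nonneg _)).symm
      _ ≤ Real.sqrt (((sInf S)⁻¹ * ‖h‖) ^ 2) := Real.sqrt_le_sqrt hnormsq
      _ = (sInf S)⁻¹ * ‖h‖ := Real.sqrt_sq hrhs
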